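/- Let 0 ≤ μ_n be a nondecreasing sequence with μ_n → μ, and let (X_k)_{k≥1} be independent random variables with X_k ~ N(μ_{k-1}, 1). Then (1/n) Σ_{k=1}^n μ_{k-1} ( X_k − μ_{k-1}/2 ) → μ²/2 almost surely as n → ∞. -/

import Mathlib

open MeasureTheory Filter ProbabilityTheory Real

/-- The density of the normal distribution `N(μ, 1)`. -/
noncomputable def normalPDF (μ x : ℝ) : ℝ :=
  (Real.sqrt (2 * Real.pi))⁻¹ * Real.exp (-(x - μ) ^ 2 / 2)

/-- A real random variable `X` has probability density `f` (w.r.t. Lebesgue). -/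
def HasDensity {Ω : Type*} [MeasurableSpace Ω] (X : Ω → ℝ) (P : Measure Ω)
    (f : ℝ → ℝ) : Prop :=
  Measure.map X P = volume.withDensity (fun x => ENNReal.ofReal (f x))

section Aux

open Finset


/-- Key bound: |∑ i < m, (a(i+1)-a i) * T(i+1)| ≤ C + ε m  -/
lemma key_bound {a : ℕ → ℝ} {L : ℝ} (ha : Monotone a) (haL : Tendsto a atTop (nhds L))
    {T : ℕ → ℝ} (hT : Tendsto (fun n : ℕ => T n / n) atTop (nhds 0))
    {ε : ℝ} (hε : 0 < ε) :
    ∃ C : ℝ, 0 ≤ C ∧ ∀ m : ℕ,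
      |∑ i ∈ range m, (a (i + 1) - a i) * T (i + 1)| ≤ C + ε * m := by
  set Cd : ℝ := L - a 0 with hCd
  have hCd0 : 0 ≤ Cd := sub_nonneg.2 (ha.ge_of_tendsto haL 0)
  set ε' : ℝ := ε / (Cd + 1) with hε'
  have hε'0 : 0 < ε' := div_pos hε (by linarith)
  -- choose N such that |T n| ≤ ε' n for n ≥ N
  obtain ⟨N, hN⟩ : ∃ N : ℕ, ∀ n ≥ N, |T n| ≤ ε' * n := by
    have := (Metric.tendsto_atTop.1 hT) ε' hε'0
    obtain ⟨N, hN⟩ := this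
    refine ⟨N + 1, fun n hn => ?_⟩
    have hn1 : 1 ≤ n := le_trans (Nat.le_add_left 1 N) hn
    have hnp : (0:ℝ) < n := by exact_mod_cast hn1
    have := hN n (le_trans (Nat.le_succ N) hn)
    rw [Real.dist_eq, sub_zero, abs_div, abs_of_pos hnp, div_lt_iff₀ hnp] at this
    exact this.le
  refine ⟨∑ i ∈ range N, (a (i + 1) - a i) * |T (i + 1)|, ?_, fun m => ?_⟩
  · exact Finset.sum_nonneg fun i _ => mul_nonneg (sub_nonneg.2 (ha (Nat.le_succ i)))
      (abs_nonneg _)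
  · calc |∑ i ∈ range m, (a (i + 1) - a i) * T (i + 1)|
        ≤ ∑ i ∈ range m, |(a (i + 1) - a i) * T (i + 1)| := Finset.abs_sum_le_sum_abs _ _
      _ = ∑ i ∈ range m, (a (i + 1) - a i) * |T (i + 1)| := by
          refine Finset.sum_congr rfl fun i _ => ?_
          rw [abs_mul, abs_of_nonneg (sub_nonneg.2 (ha (Nat.le_succ i)))]
      _ ≤ ∑ i ∈ range m, ((if i < N then (a (i + 1) - a i) * |T (i + 1)| else 0)
            + (a (i + 1) - a i) * (ε' * m)) := by
          refine Finset.sum_le_sum fun i hi => ?_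
          by_cases h : i < N
          · simp only [if_pos h]
            have : (0:ℝ) ≤ (a (i + 1) - a i) * (ε' * m) :=
              mul_nonneg (sub_nonneg.2 (ha (Nat.le_succ i)))
                (mul_nonneg hε'0.le (Nat.cast_nonneg m))
            linarith
          · simp only [if_neg h]
            push_neg at h
            have h1 : |T (i+1)| ≤ ε' * ((i:ℝ)+1) := by
              have := hN (i+1) (le_trans h (Nat.le_succ i))
              push_cast at this; exact this
            have h2 : ((i:ℝ)+1) ≤ m := by
              have := Finset.mem_range.1 hi
              exact_mod_cast Nat.succ_le_of_lt this
            have h3 : ε' * ((i:ℝ)+1) ≤ ε' * m := by nlinarith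
            have := mul_le_mul_of_nonneg_left (h1.trans h3) (sub_nonneg.2 (ha (Nat.le_succ i)))
            linarith
      _ = (∑ i ∈ range m, if i < N then (a (i + 1) - a i) * |T (i + 1)| else 0)
            + (∑ i ∈ range m, (a (i + 1) - a i)) * (ε' * m) := by
          rw [Finset.sum_add_distrib, Finset.sum_mul]
      _ ≤ (∑ i ∈ range N, (a (i + 1) - a i) * |T (i + 1)|) + ε * m := by
          gcongr ?_ + ?_
          · rw [← Finset.sum_filter]
            refine Finset.sum_le_sum_of_subset_of_nonneg ?_ ?_
            · intro i hi
              simp only [Finset.mem_filter, Finset.mem_range] at hi ⊢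
              exact hi.2
            · intro i _ _
              exact mul_nonneg (sub_nonneg.2 (ha (Nat.le_succ i))) (abs_nonneg _)
          · have hsum : ∑ i ∈ range m, (a (i + 1) - a i) = a m - a 0 :=
              Finset.sum_range_sub a m
            have ham : a m ≤ L := ha.ge_of_tendsto haL m
            have h4 : ∑ i ∈ range m, (a (i + 1) - a i) ≤ Cd := by rw [hsum, hCd]; linarith
            have h5 : ε' * Cd ≤ ε := by
              rw [hε', div_mul_eq_mul_div, div_le_iff₀ (by linarith : (0:ℝ) < Cd + 1)]
              nlinarith
            calc (∑ i ∈ range m, (a (i + 1) - a i)) * (ε' * m)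
                ≤ Cd * (ε' * m) := by
                  refine mul_le_mul_of_nonneg_right h4 ?_
                  exact mul_nonneg hε'0.le (Nat.cast_nonneg m)
              _ = (ε' * Cd) * m := by ring
              _ ≤ ε * m := mul_le_mul_of_nonneg_right h5 (Nat.cast_nonneg m)


lemma weighted_cesaro_zero {a : ℕ → ℝ} {L : ℝ} (ha : Monotone a)
    (haL : Tendsto a atTop (nhds L)) {z : ℕ → ℝ}
    (hz : Tendsto (fun n : ℕ => (∑ k ∈ range n, z k) / n) atTop (nhds 0)) :
    Tendsto (fun n : ℕ => (∑ k ∈ range n, a k * z k) / n) atTop (nhds 0) := by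
  set T : ℕ → ℝ := fun n => ∑ k ∈ range n, z k with hTdef
  set U : ℕ → ℝ := fun m => ∑ i ∈ range m, (a (i + 1) - a i) * T (i + 1) with hUdef
  have habel : ∀ n : ℕ, ∑ k ∈ range n, a k * z k = a (n - 1) * T n - U (n - 1) := by
    intro n
    have := Finset.sum_range_by_parts a z n
    simpa [smul_eq_mul, hUdef, hTdef] using this
  have h1 : Tendsto (fun n : ℕ => a (n - 1) * T n / n) atTop (nhds 0) := by
    have ha' : Tendsto (fun n : ℕ => a (n - 1)) atTop (nhds L) :=
      haL.comp (tendsto_sub_atTop_nat 1)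
    have := ha'.mul hz
    simpa [mul_div_assoc] using this
  have h2 : Tendsto (fun n : ℕ => U (n - 1) / n) atTop (nhds 0) := by
    rw [NormedAddCommGroup.tendsto_nhds_zero]
    intro ε hε
    obtain ⟨C, hC0, hC⟩ := key_bound ha haL hz (half_pos hε)
    have hev : ∀ᶠ n : ℕ in atTop, C / n < ε / 2 := by
      have : Tendsto (fun n : ℕ => C / n) atTop (nhds 0) :=
        Tendsto.div_atTop tendsto_const_nhds tendsto_natCast_atTop_atTop
      exact Tendsto.eventually_lt_const (half_pos hε) this
    filter_upwards [hev, eventually_ge_atTop 1] with n hn hn1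
    have hnp : (0:ℝ) < n := by exact_mod_cast hn1
    have hb : |U (n - 1)| ≤ C + ε / 2 * (n - 1 : ℕ) := hC (n - 1)
    have hcast : ((n - 1 : ℕ) : ℝ) ≤ (n : ℝ) := by
      exact_mod_cast Nat.sub_le n 1
    have : |U (n - 1) / n| = |U (n - 1)| / n := by
      rw [abs_div, abs_of_pos hnp]
    rw [Real.norm_eq_abs, this]
    rw [div_lt_iff₀ hnp]
    have h5 : ε / 2 * ((n - 1 : ℕ) : ℝ) ≤ ε / 2 * n :=
      mul_le_mul_of_nonneg_left hcast (half_pos hε).le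
    have h6 : C < ε / 2 * n := by
      rw [div_lt_iff₀ hnp] at hn; linarith
    calc |U (n - 1)| ≤ C + ε / 2 * (n - 1 : ℕ) := hb
      _ < ε / 2 * n + ε / 2 * n := by linarith
      _ = ε * n := by ring
  have := h1.sub h2
  rw [sub_zero] at this
  refine this.congr fun n => ?_
  rw [habel n, sub_div, mul_div_assoc]

lemma normalPDF_eq (m : ℝ) :
    (fun x => ENNReal.ofReal (normalPDF m x)) = gaussianPDF m 1 := by
  funext x
  simp only [normalPDF, gaussianPDF, gaussianPDFReal]
  norm_num

lemma withDensity_normalPDF (m : ℝ) :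
    volume.withDensity (fun x => ENNReal.ofReal (normalPDF m x)) = gaussianReal m 1 := by
  rw [gaussianReal_of_var_ne_zero _ one_ne_zero, normalPDF_eq]

lemma integrable_id_gaussianReal : Integrable (fun x : ℝ => x) (gaussianReal 0 1) := by
  rw [gaussianReal_of_var_ne_zero _ one_ne_zero]
  have hmeas : Measurable (fun x : ℝ => (gaussianPDFReal 0 1 x).toNNReal) :=
    (measurable_gaussianPDFReal 0 1).real_toNNReal
  have heq : gaussianPDF 0 1
      = fun x : ℝ => ((gaussianPDFReal 0 1 x).toNNReal : ENNReal) := rfl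
  rw [heq]
  rw [integrable_withDensity_iff_integrable_smul hmeas]
  have : (fun x : ℝ => (gaussianPDFReal 0 1 x).toNNReal • x)
      = fun x : ℝ => ((Real.sqrt (2 * Real.pi))⁻¹) * (x * Real.exp (-(2⁻¹) * x ^ 2)) := by
    funext x
    rw [NNReal.smul_def, smul_eq_mul,
      Real.coe_toNNReal _ (gaussianPDFReal_nonneg 0 1 x)]
    simp only [gaussianPDFReal]
    push_cast
    ring_nf
  rw [this]
  exact (integrable_mul_exp_neg_mul_sq (by norm_num : (0:ℝ) < 2⁻¹)).const_mul _

lemma integral_id_gaussianReal : ∫ x, x ∂(gaussianReal 0 1) = 0 := by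
  rw [gaussianReal_of_var_ne_zero _ one_ne_zero]
  have hmeas : Measurable (fun x : ℝ => (gaussianPDFReal 0 1 x).toNNReal) :=
    (measurable_gaussianPDFReal 0 1).real_toNNReal
  have heq : gaussianPDF 0 1
      = fun x : ℝ => ((gaussianPDFReal 0 1 x).toNNReal : ENNReal) := rfl
  rw [heq, integral_withDensity_eq_integral_smul hmeas]
  set f : ℝ → ℝ := fun x => (gaussianPDFReal 0 1 x).toNNReal • x with hf
  have hodd : ∀ x, f (-x) = - f x := by
    intro x
    simp only [hf, NNReal.smul_def, smul_eq_mul]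
    rw [Real.coe_toNNReal _ (gaussianPDFReal_nonneg 0 1 _),
      Real.coe_toNNReal _ (gaussianPDFReal_nonneg 0 1 _)]
    simp only [gaussianPDFReal]
    ring_nf
  have h1 : ∫ x, f (-x) = ∫ x, f x := MeasureTheory.integral_neg_eq_self f volume
  rw [show (fun x => f (-x)) = fun x => - f x from funext hodd] at h1
  rw [integral_neg] at h1
  linarith [h1]

end Aux

theorem gaussian_llr_average_tendsto
    {Ω : Type*} [MeasurableSpace Ω] (P : Measure Ω) [IsProbabilityMeasure P]
    (X : ℕ → Ω → ℝ) (μ : ℕ → ℝ) (μlim : ℝ)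
    (hμ_nonneg : ∀ n, 0 ≤ μ n)
    (hμ_mono : Monotone μ)
    (hμ_lim : Tendsto μ atTop (nhds μlim))
    (hX_meas : ∀ k, Measurable (X k))
    (hindep : iIndepFun X P)
    (hdens : ∀ k : ℕ, HasDensity (X k) P (normalPDF (μ k))) :
    ∀ᵐ ω ∂P,
      Tendsto
        (fun n : ℕ => (∑ k ∈ Finset.range n, μ k * (X k ω - μ k / 2)) / n)
        atTop (nhds (μlim ^ 2 / 2)) := by
  set Z : ℕ → Ω → ℝ := fun k ω => X k ω - μ k with hZ
  have hZmeas : ∀ k, Measurable (Z k) := fun k => (hX_meas k).sub_const _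
  have hmapX : ∀ k, Measure.map (X k) P = gaussianReal (μ k) 1 := by
    intro k
    rw [← withDensity_normalPDF]
    exact hdens k
  have hmapZ : ∀ k, Measure.map (Z k) P = gaussianReal 0 1 := by
    intro k
    have hcomp : Z k = (fun x : ℝ => x + (-μ k)) ∘ X k := by
      funext ω; simp [hZ, sub_eq_add_neg]
    rw [hcomp, ← Measure.map_map (measurable_add_const (-μ k)) (hX_meas k),
      hmapX k, gaussianReal_map_add_const]
    norm_num
  have hident : ∀ i, IdentDistrib (Z i) (Z 0) P P := fun i =>
    ⟨(hZmeas i).aemeasurable, (hZmeas 0).aemeasurable, by rw [hmapZ i, hmapZ 0]⟩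
  have hindepZ : Pairwise (Function.onFun (IndepFun · · P) Z) := by
    intro i j hij
    have h := hindep.indepFun hij
    have := h.comp (measurable_add_const (-μ i)) (measurable_add_const (-μ j))
    have hcompi : Z i = (fun x : ℝ => x + (-μ i)) ∘ X i := by
      funext ω; simp [hZ, sub_eq_add_neg]
    have hcompj : Z j = (fun x : ℝ => x + (-μ j)) ∘ X j := by
      funext ω; simp [hZ, sub_eq_add_neg]
    show IndepFun (Z i) (Z j) P
    rw [hcompi, hcompj]
    exact this
  have hintZ : Integrable (Z 0) P := by
    have h1 : Integrable (fun x : ℝ => x) (Measure.map (Z 0) P) := by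
      rw [hmapZ 0]; exact integrable_id_gaussianReal
    have := (integrable_map_measure (aestronglyMeasurable_id)
      (hZmeas 0).aemeasurable).1 h1
    simpa [Function.comp] using this
  have hmeanZ : ∫ ω, Z 0 ω ∂P = 0 := by
    have h1 : ∫ ω, Z 0 ω ∂P = ∫ x, x ∂(Measure.map (Z 0) P) :=
      (integral_map (hZmeas 0).aemeasurable aestronglyMeasurable_id).symm
    rw [h1, hmapZ 0, _root_.integral_id_gaussianReal]
  have hslln := strong_law_ae_real Z hintZ hindepZ hident
  have hcesaro : Tendsto (fun n : ℕ => (∑ k ∈ Finset.range n, μ k ^ 2 / 2) / (n : ℝ))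
      atTop (nhds (μlim ^ 2 / 2)) := by
    have := Filter.Tendsto.cesaro ((hμ_lim.pow 2).div_const 2)
    simpa [div_eq_inv_mul] using this
  filter_upwards [hslln] with ω hω
  rw [hmeanZ] at hω
  have hW : Tendsto (fun n : ℕ => (∑ k ∈ Finset.range n, μ k * Z k ω) / (n : ℝ))
      atTop (nhds 0) := weighted_cesaro_zero hμ_mono hμ_lim hω
  have := hW.add hcesaro
  rw [zero_add] at this
  refine this.congr fun n => ?_
  rw [← add_div]
  congr 1
  rw [← Finset.sum_add_distrib]
  refine Finset.sum_congr rfl fun k _ => ?_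
  simp only [hZ]
  ring
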